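/- arXiv:0804.4210 — 2 statements merged into one kernel-verified Lean document; each statement's English description precedes it below -/
import Mathlib

section
/- Let (λₙ) be a sequence of nonzero complex numbers with ∑|λₙ| < ∞, and define f(z) = ∏ₙ(1 - zλₙ). Then f is entire, and for every positive integer n and every z not equal to any λₖ⁻¹, one has (-1)ⁿ f⁽ⁿ⁾(z)/(n! f(z)) = ∑_{k₁<k₂<⋯<kₙ} ∏_{j=1}^{n} λ_{k_j}/(1 - z λ_{k_j}). -/
open Finset Filter Complex Topology
open scoped ContDiff

noncomputable section
namespace SumZeros

lemma iteratedDeriv_add' (n : ℕ) (f g : ℂ → ℂ) (hf : ContDiff ℂ ∞ f) (hg : ContDiff ℂ ∞ g) :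
    iteratedDeriv n (fun z => f z + g z) = fun z => iteratedDeriv n f z + iteratedDeriv n g z := by
  funext z
  simp only [← iteratedDerivWithin_univ]
  exact iteratedDerivWithin_add (Set.mem_univ z) uniqueDiffOn_univ
    (hf.contDiffWithinAt.of_le (by exact_mod_cast le_top)) (hg.contDiffWithinAt.of_le (by exact_mod_cast le_top))

lemma leibniz_affine (d : ℂ) :
    ∀ (n : ℕ) (g : ℂ → ℂ), ContDiff ℂ ∞ g →
      iteratedDeriv (n+1) (fun z => g z * (1 - z * d)) =
        fun z => iteratedDeriv (n+1) g z * (1 - z * d) + (n+1) * (-d) * iteratedDeriv n g z := by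
  intro n
  induction n with
  | zero =>
    intro g hg
    funext z
    have hgd : Differentiable ℂ g := hg.differentiable (by simp)
    have h1 : HasDerivAt (fun z : ℂ => 1 - z * d) (-d) z := by
      simpa using ((hasDerivAt_id z).mul_const d).const_sub 1
    have := ((hgd z).hasDerivAt.fun_mul h1)
    rw [iteratedDeriv_one, iteratedDeriv_one, iteratedDeriv_zero, this.deriv]
    ring
  | succ n IH =>
    intro g hg
    have hgd : Differentiable ℂ g := hg.differentiable (by simp)
    have hg' : ContDiff ℂ ∞ (deriv g) := (contDiff_infty_iff_deriv.mp hg).2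
    have hstep : deriv (fun z => g z * (1 - z * d)) =
        fun z => (deriv g z * (1 - z * d)) + ((-d) * g z) := by
      funext z
      have h1 : HasDerivAt (fun z : ℂ => 1 - z * d) (-d) z := by
        simpa using ((hasDerivAt_id z).mul_const d).const_sub 1
      have := ((hgd z).hasDerivAt.fun_mul h1)
      rw [this.deriv]; ring
    rw [iteratedDeriv_succ', hstep]
    rw [iteratedDeriv_add' (n+1) _ _ ((hg'.mul (by fun_prop))) (by fun_prop)]
    have h2 := IH (deriv g) hg'
    funext z
    rw [h2]
    have h3 : iteratedDeriv (n+1) (fun z => (-d) * g z) z = (-d) * iteratedDeriv (n+1) g z := by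
      simp only [← iteratedDerivWithin_univ]
      exact iteratedDerivWithin_const_mul (Set.mem_univ z) uniqueDiffOn_univ (-d)
        (hg.contDiffWithinAt.of_le (by exact_mod_cast le_top))
    rw [h3, ← iteratedDeriv_succ', ← iteratedDeriv_succ']
    push_cast
    ring

lemma contDiff_linprod (μ : ℕ → ℂ) (t : Finset ℕ) :
    ContDiff ℂ ∞ (fun z => ∏ i ∈ t, (1 - z * μ i)) :=
  contDiff_prod fun _ _ => contDiff_const.sub (contDiff_id.mul contDiff_const)

lemma finite_formula (μ : ℕ → ℂ) (N n : ℕ) :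
    iteratedDeriv n (fun z => ∏ i ∈ Finset.range N, (1 - z * μ i)) = fun z =>
      (n.factorial : ℂ) * (-1)^n * ∑ s ∈ (Finset.range N).powersetCard n,
        (∏ i ∈ s, μ i) * ∏ i ∈ Finset.range N \ s, (1 - z * μ i) := by
  induction N generalizing n with
  | zero =>
    cases n with
    | zero => funext z; simp
    | succ n =>
      funext z
      rw [iteratedDeriv_eq_iteratedFDeriv]
      simp [Finset.range_zero, iteratedFDeriv_const_of_ne (Nat.succ_ne_zero n),
        Finset.powersetCard_eq_empty.2 (by simp : (∅ : Finset ℕ).card < n + 1)]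
  | succ N IH =>
    cases n with
    | zero =>
      funext z
      simp [Finset.powersetCard_zero, Finset.sdiff_empty]
    | succ n =>
      have hprod : (fun z : ℂ => ∏ i ∈ Finset.range (N+1), (1 - z * μ i)) =
          fun z => (∏ i ∈ Finset.range N, (1 - z * μ i)) * (1 - z * μ N) := by
        funext z; rw [Finset.prod_range_succ]
      rw [hprod, leibniz_affine (μ N) n _ (contDiff_linprod μ (Finset.range N)), IH, IH]
      funext z
      have hN : N ∉ Finset.range N := Finset.notMem_range_self
      have hsd : ∀ s : Finset ℕ, s ⊆ Finset.range N →
          insert N (Finset.range N) \ insert N s = Finset.range N \ s := by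
        intro s hs; ext i
        simp only [Finset.mem_sdiff, Finset.mem_insert, Finset.mem_range]
        constructor
        · rintro ⟨h1 | h1, h2⟩
          · exact absurd (Or.inl h1) h2
          · push_neg at h2; exact ⟨h1, h2.2⟩
        · rintro ⟨h1, h2⟩
          refine ⟨Or.inr h1, ?_⟩
          push_neg
          exact ⟨Nat.ne_of_lt h1, h2⟩
      have hdisj : Disjoint ((Finset.range N).powersetCard (n+1))
          (((Finset.range N).powersetCard n).image (insert N)) := by
        rw [Finset.disjoint_left]
        intro s hs hs'
        obtain ⟨hsub, _⟩ := Finset.mem_powersetCard.1 hs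
        obtain ⟨t, _, rfl⟩ := Finset.mem_image.1 hs'
        exact hN (hsub (Finset.mem_insert_self N t))
      have key : ∑ s ∈ (Finset.range (N+1)).powersetCard (n+1),
            (∏ i ∈ s, μ i) * ∏ i ∈ Finset.range (N+1) \ s, (1 - z * μ i)
          = (∑ s ∈ (Finset.range N).powersetCard (n+1),
              (∏ i ∈ s, μ i) * ∏ i ∈ Finset.range N \ s, (1 - z * μ i)) * (1 - z * μ N)
            + μ N * ∑ s ∈ (Finset.range N).powersetCard n,
              (∏ i ∈ s, μ i) * ∏ i ∈ Finset.range N \ s, (1 - z * μ i) := by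
        rw [Finset.range_add_one, Finset.powersetCard_succ_insert hN, Finset.sum_union hdisj]
        congr 1
        · rw [Finset.sum_mul]
          refine Finset.sum_congr rfl fun s hs => ?_
          obtain ⟨hsub, _⟩ := Finset.mem_powersetCard.1 hs
          have hNs : N ∉ s := fun h => hN (hsub h)
          rw [Finset.insert_sdiff_of_notMem _ hNs,
            Finset.prod_insert (fun h => hN (Finset.mem_sdiff.1 h).1)]
          ring
        · rw [Finset.sum_image (fun s hs t ht h => by
            obtain ⟨hsub, _⟩ := Finset.mem_powersetCard.1 hs
            obtain ⟨htub, _⟩ := Finset.mem_powersetCard.1 ht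
            have h2 := congrArg (Finset.erase · N) h
            simpa [Finset.erase_insert (fun hh => hN (hsub hh)),
              Finset.erase_insert (fun hh => hN (htub hh))] using h2), Finset.mul_sum]
          refine Finset.sum_congr rfl fun s hs => ?_
          obtain ⟨hsub, _⟩ := Finset.mem_powersetCard.1 hs
          have hNs : N ∉ s := fun h => hN (hsub h)
          rw [Finset.prod_insert hNs, hsd s hsub]
          ring
      rw [key, Nat.factorial_succ]
      push_cast
      ring

lemma summable_prod_finsets {c : ℕ → ℝ} (hc : ∀ i, 0 ≤ c i) (h : Summable c) :
    Summable (fun s : Finset ℕ => ∏ i ∈ s, c i) := by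
  apply summable_of_sum_le (fun s => Finset.prod_nonneg fun i _ => hc i)
  intro u
  calc ∑ s ∈ u, ∏ i ∈ s, c i
      ≤ ∑ s ∈ (u.sup id).powerset, ∏ i ∈ s, c i :=
        Finset.sum_le_sum_of_subset_of_nonneg
          (fun s hs => Finset.mem_powerset.2 (Finset.le_sup (f := id) hs))
          (fun s _ _ => Finset.prod_nonneg fun i _ => hc i)
    _ = ∏ i ∈ u.sup id, (c i + 1) := by
        rw [Finset.prod_add]
        simp
    _ ≤ ∏ i ∈ u.sup id, Real.exp (c i) :=
        Finset.prod_le_prod (fun i _ => by linarith [hc i])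
          (fun i _ => by linarith [Real.add_one_le_exp (c i)])
    _ = Real.exp (∑ i ∈ u.sup id, c i) := (Real.exp_sum _ _).symm
    _ ≤ Real.exp (∑' i, c i) := Real.exp_le_exp.2 (h.sum_le_tsum _ (fun i _ => hc i))

lemma hasProd_one_add (b : ℕ → ℂ) (hb : Summable (fun s : Finset ℕ => ‖∏ i ∈ s, b i‖)) :
    HasProd (fun i => 1 + b i) (∑' s : Finset ℕ, ∏ i ∈ s, b i) := by
  have hs : HasSum (fun s : Finset ℕ => ∏ i ∈ s, b i) (∑' s : Finset ℕ, ∏ i ∈ s, b i) :=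
    hb.of_norm.hasSum
  have hp : Tendsto (fun t : Finset ℕ => t.powerset) atTop atTop :=
    tendsto_atTop_finset_of_monotone (fun s t h => Finset.powerset_mono.2 h)
      (fun s => ⟨s, Finset.mem_powerset_self s⟩)
  have h2 : Tendsto (fun t : Finset ℕ => ∑ s ∈ t.powerset, ∏ i ∈ s, b i) atTop
      (𝓝 (∑' s : Finset ℕ, ∏ i ∈ s, b i)) := hs.comp hp
  refine h2.congr fun t => ?_
  rw [eq_comm]
  calc ∏ i ∈ t, (1 + b i) = ∏ i ∈ t, (b i + 1) := by simp [add_comm]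
    _ = ∑ s ∈ t.powerset, ∏ i ∈ s, b i := by rw [Finset.prod_add]; simp
lemma prod_range_eq_sum_powerset (lam : ℕ → ℂ) (z : ℂ) (N : ℕ) :
    ∏ i ∈ Finset.range N, (1 - z * lam i)
      = ∑ s ∈ (Finset.range N).powerset, ∏ i ∈ s, (-(z * lam i)) := by
  calc ∏ i ∈ Finset.range N, (1 - z * lam i)
      = ∏ i ∈ Finset.range N, ((-(z * lam i)) + 1) :=
        Finset.prod_congr rfl fun i _ => by ring
    _ = ∑ s ∈ (Finset.range N).powerset, ∏ i ∈ s, (-(z * lam i)) := by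
        rw [Finset.prod_add]; simp

lemma hasProd_f (lam : ℕ → ℂ) (hsum : Summable fun n => ‖lam n‖) (z : ℂ) :
    HasProd (fun i => 1 - z * lam i) (∑' s : Finset ℕ, ∏ i ∈ s, (-(z * lam i))) := by
  have hb : Summable (fun s : Finset ℕ => ‖∏ i ∈ s, (-(z * lam i))‖) := by
    have h1 : Summable (fun s : Finset ℕ => ∏ i ∈ s, (‖z‖ * ‖lam i‖)) :=
      summable_prod_finsets (fun i => mul_nonneg (norm_nonneg _) (norm_nonneg _))
        (hsum.mul_left _)
    refine h1.congr fun s => ?_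
    rw [norm_prod]
    exact Finset.prod_congr rfl fun i _ => by rw [norm_neg, norm_mul]
  have h := hasProd_one_add _ hb
  have he : (fun i => 1 - z * lam i) = fun i => 1 + (-(z * lam i)) := funext fun i => by ring
  rw [he]
  exact h

lemma tlu (lam : ℕ → ℂ) (hsum : Summable fun n => ‖lam n‖) (f : ℂ → ℂ)
    (hf : ∀ z, f z = ∏' n, (1 - z * lam n)) :
    TendstoLocallyUniformlyOn (fun N z => ∏ i ∈ Finset.range N, (1 - z * lam i))
      f atTop Set.univ := by
  rw [tendstoLocallyUniformlyOn_iff_forall_isCompact isOpen_univ]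
  intro K _ hK
  obtain ⟨R, hR⟩ := hK.isBounded.subset_closedBall 0
  refine TendstoUniformlyOn.mono ?_
    (hR.trans (Metric.closedBall_subset_closedBall (le_max_left R 0)))
  set R' := max R 0 with hR'
  set u : Finset ℕ → ℝ := fun s => ∏ i ∈ s, (R' * ‖lam i‖) with hu_def
  have hu : Summable u :=
    summable_prod_finsets (fun i => mul_nonneg (le_max_right R 0) (norm_nonneg _))
      (hsum.mul_left R')
  have hpart : Tendsto (fun N => ∑ s ∈ (Finset.range N).powerset, u s) atTop
      (𝓝 (∑' s, u s)) := by
    have hp : Tendsto (fun t : Finset ℕ => t.powerset) atTop atTop :=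
      tendsto_atTop_finset_of_monotone (fun s t h => Finset.powerset_mono.2 h)
        (fun s => ⟨s, Finset.mem_powerset_self s⟩)
    exact hu.hasSum.comp (hp.comp tendsto_finset_range)
  rw [Metric.tendstoUniformlyOn_iff]
  intro ε hε
  have hev : ∀ᶠ N in atTop, (∑' s, u s) - ∑ s ∈ (Finset.range N).powerset, u s < ε := by
    filter_upwards [Metric.tendsto_nhds.mp hpart ε hε] with N hN
    have h2 := abs_lt.1 (by simpa [Real.dist_eq] using hN)
    linarith [h2.1]
  filter_upwards [hev] with N hN z hz
  have hzn : ‖z‖ ≤ R' := by simpa using hz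
  set c : Finset ℕ → ℂ := fun s => ∏ i ∈ s, (-(z * lam i)) with hc_def
  have hbound : ∀ s, ‖c s‖ ≤ u s := by
    intro s
    rw [hc_def, hu_def]
    calc ‖∏ i ∈ s, (-(z * lam i))‖ = ∏ i ∈ s, ‖z * lam i‖ := by
          rw [norm_prod]; exact Finset.prod_congr rfl fun i _ => by rw [norm_neg]
      _ ≤ ∏ i ∈ s, (R' * ‖lam i‖) :=
          Finset.prod_le_prod (fun i _ => norm_nonneg _)
            (fun i _ => by rw [norm_mul]; exact mul_le_mul_of_nonneg_right hzn (norm_nonneg _))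
  have hcs : Summable (fun s => ‖c s‖) :=
    Summable.of_nonneg_of_le (fun _ => norm_nonneg _) hbound hu
  have hfz : f z = ∑' s : Finset ℕ, c s := by
    rw [hf z, (hasProd_f lam hsum z).tprod_eq]
  have hFz : ∏ i ∈ Finset.range N, (1 - z * lam i) = ∑ s ∈ (Finset.range N).powerset, c s :=
    prod_range_eq_sum_powerset lam z N
  rw [dist_eq_norm, hfz, hFz]
  have hsplit := Summable.sum_add_tsum_compl (s := (Finset.range N).powerset) hcs.of_norm
  have husplit := Summable.sum_add_tsum_compl (s := (Finset.range N).powerset) hu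
  rw [← hsplit]
  have h3 : ‖∑' x : ↑(↑((Finset.range N).powerset : Finset (Finset ℕ)) : Set (Finset ℕ))ᶜ, c ↑x‖
      ≤ ∑' x : ↑(↑((Finset.range N).powerset : Finset (Finset ℕ)) : Set (Finset ℕ))ᶜ, u ↑x := by
    refine le_trans (norm_tsum_le_tsum_norm (hcs.subtype _)) ?_
    exact Summable.tsum_le_tsum (fun x => hbound x.1) (hcs.subtype _) (hu.subtype _)
  have husplit' : (∑' x : ↑(↑((Finset.range N).powerset : Finset (Finset ℕ)) : Set (Finset ℕ))ᶜ, u ↑x)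
      = (∑' s, u s) - ∑ s ∈ (Finset.range N).powerset, u s := by linarith [husplit]
  have h4 : ∑ s ∈ (Finset.range N).powerset, c s +
      (∑' x : ↑(↑((Finset.range N).powerset : Finset (Finset ℕ)) : Set (Finset ℕ))ᶜ, c ↑x) -
      ∑ s ∈ (Finset.range N).powerset, c s
      = ∑' x : ↑(↑((Finset.range N).powerset : Finset (Finset ℕ)) : Set (Finset ℕ))ᶜ, c ↑x := by
    ring
  rw [h4]
  exact lt_of_le_of_lt (h3.trans_eq husplit') hN
lemma tlu_iter (lam : ℕ → ℂ) (hsum : Summable fun n => ‖lam n‖) (f : ℂ → ℂ)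
    (hf : ∀ z, f z = ∏' n, (1 - z * lam n)) (n : ℕ) :
    TendstoLocallyUniformlyOn
      (fun N => deriv^[n] (fun z => ∏ i ∈ Finset.range N, (1 - z * lam i)))
      (deriv^[n] f) atTop Set.univ := by
  induction n with
  | zero => exact tlu lam hsum f hf
  | succ n IH =>
    have hdiff : ∀ N : ℕ, DifferentiableOn ℂ
        (deriv^[n] (fun z => ∏ i ∈ Finset.range N, (1 - z * lam i))) Set.univ :=
      fun N => ((ContDiff.iterate_deriv n (contDiff_linprod lam (Finset.range N))).differentiable
        (by simp)).differentiableOn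
    have h := IH.deriv (Filter.Eventually.of_forall hdiff) isOpen_univ
    simpa only [Function.iterate_succ', Function.comp_def] using h

lemma f_ne_zero (lam : ℕ → ℂ) (hsum : Summable fun n => ‖lam n‖) (z : ℂ)
    (hfn : ∀ k, (1:ℂ) - z * lam k ≠ 0) : (∏' n, (1 - z * lam n)) ≠ 0 := by
  have hlog : Summable (fun k => Complex.log (1 - z * lam k)) := by
    have hten : Tendsto (fun k => ‖z‖ * ‖lam k‖) atTop (𝓝 0) := by
      simpa using hsum.tendsto_atTop_zero.const_mul ‖z‖
    have hev : ∀ᶠ k in atTop, ‖Complex.log (1 - z * lam k)‖ ≤ (3/2) * (‖z‖ * ‖lam k‖) := by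
      filter_upwards [hten.eventually (gt_mem_nhds (by norm_num : (0:ℝ) < 1/2))] with k hk
      have h1 : (1:ℂ) - z * lam k = 1 + (-(z * lam k)) := by ring
      have h2 : ‖-(z * lam k)‖ ≤ 1/2 := by
        rw [norm_neg, norm_mul]; exact le_of_lt hk
      calc ‖Complex.log (1 - z * lam k)‖ = ‖Complex.log (1 + (-(z * lam k)))‖ := by rw [h1]
        _ ≤ (3/2) * ‖-(z * lam k)‖ := Complex.norm_log_one_add_half_le_self h2
        _ = (3/2) * (‖z‖ * ‖lam k‖) := by rw [norm_neg, norm_mul]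
    exact Summable.of_norm_bounded_eventually_nat ((hsum.mul_left ‖z‖).mul_left (3/2)) hev
  have h2 := Complex.cexp_tsum_eq_tprod hfn hlog
  rw [← h2]
  exact Complex.exp_ne_zero _
end SumZeros
end

/-- Theorem 3.1, first part: for a sequence of nonzero complex numbers `lam` with
`∑ ‖lam n‖ < ∞`, the function `f z = ∏ (1 - z * lam n)` is entire and its higher
logarithmic derivatives are given by multiple sums over strictly increasing index
tuples (equivalently, finite index sets of cardinality `n`). -/
theorem sum_zeros_log_deriv (lam : ℕ → ℂ) (hne : ∀ n, lam n ≠ 0)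
    (hsum : Summable fun n => ‖lam n‖)
    (f : ℂ → ℂ) (hf : ∀ z, f z = ∏' n, (1 - z * lam n)) :
    Differentiable ℂ f ∧
      ∀ n : ℕ, 0 < n → ∀ z : ℂ, (∀ k, z ≠ (lam k)⁻¹) →
        (-1 : ℂ) ^ n * iteratedDeriv n f z / ((n.factorial : ℂ) * f z) =
          ∑' s : {s : Finset ℕ // s.card = n},
            ∏ i ∈ s.1, lam i / (1 - z * lam i) := by
  classical
  have hF := SumZeros.tlu lam hsum f hf
  have hdiffN : ∀ N : ℕ, DifferentiableOn ℂ
      (fun z => ∏ i ∈ Finset.range N, (1 - z * lam i)) Set.univ :=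
    fun N => ((SumZeros.contDiff_linprod lam (Finset.range N)).differentiable
      (by simp)).differentiableOn
  have hdf : Differentiable ℂ f := by
    have := hF.differentiableOn (Filter.Eventually.of_forall hdiffN) isOpen_univ
    rwa [← differentiableOn_univ]
  refine ⟨hdf, ?_⟩
  intro n hn z hz
  have hfn : ∀ k, (1:ℂ) - z * lam k ≠ 0 := by
    intro k h
    apply hz k
    have h1 : z * lam k = 1 := by rwa [sub_eq_zero, eq_comm] at h
    rw [mul_comm] at h1
    exact eq_inv_of_mul_eq_one_right h1
  have hfac : (n.factorial : ℂ) ≠ 0 := Nat.cast_ne_zero.2 n.factorial_ne_zero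
  have hfz : f z ≠ 0 := by rw [hf z]; exact SumZeros.f_ne_zero lam hsum z hfn
  set g : ℕ → ℂ := fun i => lam i / (1 - z * lam i) with hg_def
  have hgs : Summable (fun i => ‖g i‖) := by
    have hten : Tendsto (fun k => ‖z‖ * ‖lam k‖) atTop (𝓝 0) := by
      simpa using hsum.tendsto_atTop_zero.const_mul ‖z‖
    have hev : ∀ᶠ k in atTop, ‖(‖g k‖)‖ ≤ 2 * ‖lam k‖ := by
      filter_upwards [hten.eventually (gt_mem_nhds (by norm_num : (0:ℝ) < 1/2))] with k hk
      have hzlk : ‖z * lam k‖ < 1/2 := by rwa [norm_mul]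
      have hlow : (1:ℝ)/2 ≤ ‖(1:ℂ) - z * lam k‖ := by
        have h2 := norm_sub_norm_le (1:ℂ) (z * lam k)
        simp only [norm_one] at h2
        linarith
      rw [Real.norm_of_nonneg (norm_nonneg _), hg_def]
      rw [norm_div, div_le_iff₀ (by linarith)]
      nlinarith [norm_nonneg (lam k)]
    exact Summable.of_norm_bounded_eventually_nat (hsum.mul_left 2) hev
  have hv : Summable (fun s : Finset ℕ => ∏ i ∈ s, ‖g i‖) :=
    SumZeros.summable_prod_finsets (fun i => norm_nonneg _) hgs
  have hσ : Summable (fun s : {s : Finset ℕ // s.card = n} => ∏ i ∈ s.1, g i) := by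
    refine Summable.of_norm_bounded (g :=
      fun s : {s : Finset ℕ // s.card = n} => ∏ i ∈ s.1, ‖g i‖)
      (hv.subtype {s : Finset ℕ | s.card = n}) ?_
    intro s
    rw [norm_prod]
  set T : ℕ → Finset {s : Finset ℕ // s.card = n} :=
    fun N => ((Finset.range N).powersetCard n).subtype (fun s => s.card = n) with hT_def
  have hT : Tendsto T atTop atTop := by
    apply tendsto_atTop_finset_of_monotone
    · intro a b hab
      exact Finset.subtype_mono (Finset.powersetCard_mono (Finset.range_subset_range.2 hab))
    · intro s
      refine ⟨s.1.sup id + 1, ?_⟩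
      rw [hT_def, Finset.mem_subtype]
      exact Finset.mem_powersetCard.2
        ⟨fun i hi => Finset.mem_range.2 (Nat.lt_succ_of_le (Finset.le_sup (f := id) hi)), s.2⟩
  have htendR : Tendsto (fun N => ∑ x ∈ T N, ∏ i ∈ x.1, g i) atTop
      (𝓝 (∑' s : {s : Finset ℕ // s.card = n}, ∏ i ∈ s.1, g i)) := hσ.hasSum.comp hT
  have hTsum : ∀ N, ∑ x ∈ T N, ∏ i ∈ x.1, g i
      = ∑ s ∈ (Finset.range N).powersetCard n, ∏ i ∈ s, g i := by
    intro N
    have hmem := Finset.subtype_map_of_mem (p := fun s : Finset ℕ => s.card = n)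
      (s := (Finset.range N).powersetCard n) (fun s hs => (Finset.mem_powersetCard.1 hs).2)
    conv_rhs => rw [← hmem]
    rw [Finset.sum_map]
    rfl
  have hFzN : ∀ N, (∏ i ∈ Finset.range N, (1 - z * lam i)) ≠ 0 :=
    fun N => Finset.prod_ne_zero_iff.2 fun i _ => hfn i
  have hsq : ((-1:ℂ)^n) * ((-1:ℂ)^n) = 1 := by
    rw [← pow_add]
    exact Even.neg_one_pow ⟨n, rfl⟩
  have hfin : ∀ N, ∑ s ∈ (Finset.range N).powersetCard n, ∏ i ∈ s, g i
      = (-1:ℂ)^n * iteratedDeriv n (fun z => ∏ i ∈ Finset.range N, (1 - z * lam i)) z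
        / ((n.factorial : ℂ) * ∏ i ∈ Finset.range N, (1 - z * lam i)) := by
    intro N
    simp only [SumZeros.finite_formula lam N n]
    rw [eq_comm]
    set S := ∑ s ∈ (Finset.range N).powersetCard n,
      (∏ i ∈ s, lam i) * ∏ i ∈ Finset.range N \ s, (1 - z * lam i) with hS_def
    have h1 : (-1:ℂ)^n * ((n.factorial : ℂ) * (-1)^n * S) = (n.factorial : ℂ) * S := by
      calc (-1:ℂ)^n * ((n.factorial : ℂ) * (-1)^n * S)
          = ((-1:ℂ)^n * (-1)^n) * ((n.factorial : ℂ) * S) := by ring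
        _ = (n.factorial : ℂ) * S := by rw [hsq, one_mul]
    rw [h1, mul_div_mul_left _ _ hfac, hS_def, Finset.sum_div]
    refine Finset.sum_congr rfl fun s hs => ?_
    obtain ⟨hsub, _⟩ := Finset.mem_powersetCard.1 hs
    have hprodsplit : (∏ i ∈ Finset.range N, (1 - z * lam i))
        = (∏ i ∈ Finset.range N \ s, (1 - z * lam i)) * ∏ i ∈ s, (1 - z * lam i) :=
      (Finset.prod_sdiff hsub).symm
    rw [hprodsplit, hg_def]
    rw [Finset.prod_div_distrib]
    have hb : (∏ i ∈ s, (1 - z * lam i)) ≠ 0 := Finset.prod_ne_zero_iff.2 fun i _ => hfn i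
    have hc : (∏ i ∈ Finset.range N \ s, (1 - z * lam i)) ≠ 0 :=
      Finset.prod_ne_zero_iff.2 fun i _ => hfn i
    field_simp
  have hLHS : Tendsto (fun N =>
      (-1:ℂ)^n * iteratedDeriv n (fun z => ∏ i ∈ Finset.range N, (1 - z * lam i)) z
        / ((n.factorial : ℂ) * ∏ i ∈ Finset.range N, (1 - z * lam i))) atTop
      (𝓝 ((-1:ℂ)^n * iteratedDeriv n f z / ((n.factorial : ℂ) * f z))) := by
    have h1 : Tendsto (fun N =>
        iteratedDeriv n (fun z => ∏ i ∈ Finset.range N, (1 - z * lam i)) z) atTop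
        (𝓝 (iteratedDeriv n f z)) := by
      have := (SumZeros.tlu_iter lam hsum f hf n).tendsto_at (Set.mem_univ z)
      simpa [iteratedDeriv_eq_iterate] using this
    have h2 : Tendsto (fun N => ∏ i ∈ Finset.range N, (1 - z * lam i)) atTop (𝓝 (f z)) := by
      simpa using hF.tendsto_at (Set.mem_univ z)
    exact (tendsto_const_nhds.mul h1).div (tendsto_const_nhds.mul h2) (mul_ne_zero hfac hfz)
  have heq : ∀ N, ∑ x ∈ T N, ∏ i ∈ x.1, g i
      = (-1:ℂ)^n * iteratedDeriv n (fun z => ∏ i ∈ Finset.range N, (1 - z * lam i)) z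
        / ((n.factorial : ℂ) * ∏ i ∈ Finset.range N, (1 - z * lam i)) :=
    fun N => (hTsum N).trans (hfin N)
  exact tendsto_nhds_unique hLHS (htendR.congr heq)
end

section
/- For every positive integer n, the multiple sum ∑_{1 ≤ k₁ < k₂ < ⋯ < kₙ} 1/(k₁² k₂² ⋯ kₙ²) equals π^{2n}/(2n+1)!. -/
open Filter Finset Real Topology


lemma prod_tendsto_sinh (x : ℝ) (hx : 0 < x) :
    Tendsto (fun N => ∏ j ∈ Finset.range N, (1 + x ^ 2 * (1 / ((j : ℝ) + 1) ^ 2))) atTop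
      (𝓝 (Real.sinh (π * x) / (π * x))) := by
  have h := Complex.tendsto_euler_sin_prod (x * Complex.I)
  have hne : (π : ℂ) * (x * Complex.I) ≠ 0 := by
    simp [Real.pi_ne_zero, hx.ne', Complex.I_ne_zero]
  have h2 := h.const_mul (((π : ℂ) * (x * Complex.I))⁻¹)
  simp only [inv_mul_cancel_left₀ hne] at h2
  have key : Tendsto (fun N => ((∏ j ∈ Finset.range N,
      (1 + x ^ 2 * (1 / ((j : ℝ) + 1) ^ 2)) : ℝ) : ℂ)) atTop
      (𝓝 ((Real.sinh (π * x) / (π * x) : ℝ) : ℂ)) := by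
    convert h2 using 2 with N
    · push_cast
      apply Finset.prod_congr rfl
      intro j _
      have hj : ((j:ℂ)+1)^2 ≠ 0 := by
        have h0 : (0:ℝ) < ((j:ℝ)+1)^2 := by positivity
        intro hc
        simp only [← Complex.ofReal_natCast, ← Complex.ofReal_one, ← Complex.ofReal_add,
          ← Complex.ofReal_pow, Complex.ofReal_eq_zero] at hc
        exact h0.ne' hc
      rw [mul_pow, Complex.I_sq]
      ring
    · have hrw : (π : ℂ) * (x * Complex.I) = ((π * x : ℝ) : ℂ) * Complex.I := by push_cast; ring
      rw [hrw, Complex.sin_mul_I, ← Complex.ofReal_sinh]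
      have hpx : ((π * x : ℝ) : ℂ) ≠ 0 := by
        simp only [Complex.ofReal_ne_zero]
        positivity
      push_cast
      have hπ : (π : ℂ) ≠ 0 := by simpa using Real.pi_ne_zero
      have hxc : (x : ℂ) ≠ 0 := by simpa using hx.ne'
      rw [mul_comm _ (Complex.sinh _ * Complex.I), ← div_eq_mul_inv,
        div_eq_div_iff (mul_ne_zero hπ hxc)
          (mul_ne_zero (mul_ne_zero hπ hxc) Complex.I_ne_zero)]
      ring
  have h3 := (Complex.continuous_re.tendsto _).comp key
  simp only [Function.comp_def, Complex.ofReal_re] at h3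
  exact h3

lemma hasSum_finsets (x : ℝ) (hx : 0 < x) :
    HasSum (fun s : Finset ℕ => ∏ i ∈ s, (x ^ 2 * (1 / ((i : ℝ) + 1) ^ 2)))
      (Real.sinh (π * x) / (π * x)) := by
  set f : ℕ → ℝ := fun i => x ^ 2 * (1 / ((i : ℝ) + 1) ^ 2) with hf
  have hf0 : ∀ i, 0 ≤ f i := fun i => by
    simp only [hf]; positivity
  set F : Finset ℕ → ℝ := fun s => ∏ i ∈ s, f i with hF
  have hF0 : ∀ s, 0 ≤ F s := fun s => Finset.prod_nonneg fun i _ => hf0 i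
  set L := Real.sinh (π * x) / (π * x) with hL
  set P : ℕ → ℝ := fun N => ∏ j ∈ Finset.range N, (1 + f j) with hP
  have hPlim : Tendsto P atTop (𝓝 L) := prod_tendsto_sinh x hx
  have hPpos : ∀ N, 0 ≤ P N := fun N =>
    Finset.prod_nonneg fun i _ => by have := hf0 i; linarith
  have hmono : Monotone P := by
    apply monotone_nat_of_le_succ
    intro N
    have : P (N + 1) = P N * (1 + f N) := Finset.prod_range_succ _ N
    rw [this]
    have := hf0 N
    nlinarith [hPpos N]
  have hPle : ∀ N, P N ≤ L := hmono.ge_of_tendsto hPlim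
  have hexp : ∀ N, P N = ∑ s ∈ (Finset.range N).powerset, F s := by
    intro N
    simp only [hP, hF]
    rw [show (fun j => (1 : ℝ) + f j) = fun j => f j + 1 by funext j; ring]
    rw [Finset.prod_add]
    simp
  -- every finite set of finsets sits in some powerset of a range
  have hsub : ∀ u : Finset (Finset ℕ), ∃ N, u ⊆ (Finset.range N).powerset := by
    intro u
    refine ⟨(u.sup id).sup id + 1, fun s hs => ?_⟩
    rw [Finset.mem_powerset]
    intro i hi
    rw [Finset.mem_range, Nat.lt_succ_iff]
    exact Finset.le_sup (f := id) (Finset.mem_sup.2 ⟨s, hs, hi⟩)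
  have hsummable : Summable F := by
    apply summable_of_sum_le hF0
    intro u
    obtain ⟨N, hN⟩ := hsub u
    calc ∑ s ∈ u, F s ≤ ∑ s ∈ (Finset.range N).powerset, F s :=
          Finset.sum_le_sum_of_subset_of_nonneg hN fun s _ _ => hF0 s
      _ = P N := (hexp N).symm
      _ ≤ L := hPle N
  have hcof : Tendsto (fun N => (Finset.range N).powerset) atTop atTop := by
    apply tendsto_atTop_atTop.2
    intro u
    obtain ⟨N, hN⟩ := hsub u
    exact ⟨N, fun M hM => hN.trans (Finset.powerset_mono.2 (Finset.range_subset_range.2 hM))⟩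
  have h1 : Tendsto (fun N => ∑ s ∈ (Finset.range N).powerset, F s) atTop (𝓝 (∑' s, F s)) :=
    hsummable.hasSum.comp hcof
  have h2 : Tendsto (fun N => ∑ s ∈ (Finset.range N).powerset, F s) atTop (𝓝 L) := by
    apply hPlim.congr
    intro N
    exact hexp N
  have : ∑' s, F s = L := tendsto_nhds_unique h1 h2
  exact this ▸ hsummable.hasSum

lemma hasSum_coeff (x : ℝ) (hx : 0 < x) :
    HasSum (fun n : ℕ =>
        (∑' s : {s : Finset ℕ // s.card = n}, ∏ i ∈ s.1, (1 : ℝ) / ((i : ℝ) + 1) ^ 2) * (x ^ 2) ^ n)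
      (Real.sinh (π * x) / (π * x)) := by
  have h := (hasSum_finsets x hx).tsum_fiberwise Finset.card
  convert h using 1
  · rfl
  funext n
  show _ = ∑' s : {s : Finset ℕ // s.card = n}, ∏ i ∈ (s : Finset ℕ), (x ^ 2 * (1 / ((i : ℝ) + 1) ^ 2))
  rw [← tsum_mul_right]
  apply tsum_congr
  intro s
  rw [Finset.prod_mul_distrib, Finset.prod_const, s.2, mul_comm]

lemma hasSum_sinh_series (y : ℝ) :
    HasSum (fun n : ℕ => y ^ (2 * n + 1) / ((2 * n + 1).factorial : ℝ)) (Real.sinh y) := by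
  have h1 : HasSum (fun n : ℕ => y ^ n / (n.factorial : ℝ)) (Real.exp y) := by
    rw [Real.exp_eq_exp_ℝ]; exact NormedSpace.expSeries_div_hasSum_exp y
  have h2 : HasSum (fun n : ℕ => (-y) ^ n / (n.factorial : ℝ)) (Real.exp (-y)) := by
    rw [Real.exp_eq_exp_ℝ]; exact NormedSpace.expSeries_div_hasSum_exp (-y)
  have h3 := (h1.sub h2).div_const 2
  rw [← Real.sinh_eq] at h3
  have hinj : Function.Injective (fun n : ℕ => 2 * n + 1) := fun a b h => by
    have : 2 * a + 1 = 2 * b + 1 := h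
    omega
  have hvanish : ∀ k ∉ Set.range (fun n : ℕ => 2 * n + 1),
      (y ^ k / (k.factorial : ℝ) - (-y) ^ k / (k.factorial : ℝ)) / 2 = 0 := by
    intro k hk
    have hek : Even k := by
      rcases Nat.even_or_odd k with he | ho
      · exact he
      · exact absurd (Set.mem_range.2 ⟨ho.choose, ho.choose_spec.symm⟩) hk
    rw [hek.neg_pow]
    ring
  have h4 := (Function.Injective.hasSum_iff hinj hvanish).2 h3
  convert h4 using 1
  funext n
  show _ = (y ^ (2 * n + 1) / _ - (-y) ^ (2 * n + 1) / _) / 2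
  rw [(odd_two_mul_add_one n).neg_pow]
  ring

lemma coeff_unique {c : ℕ → ℝ}
    (h : ∀ t : ℝ, 0 < t → t ≤ 1 / 2 → HasSum (fun n => c n * t ^ n) 0) :
    ∀ n, c n = 0 := by
  -- bound |c n| ≤ A * 2^n
  have hs := (h (1/2) (by norm_num) le_rfl).summable
  have htend : Tendsto (fun n => |c n * (1/2) ^ n|) atTop (𝓝 0) := by
    simpa using hs.tendsto_atTop_zero.abs
  obtain ⟨A, hA⟩ : ∃ A : ℝ, ∀ n, |c n * (1/2) ^ n| ≤ A := by
    obtain ⟨A, hA⟩ := htend.bddAbove_range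
    exact ⟨A, fun n => hA (Set.mem_range_self n)⟩
  have hA0 : 0 ≤ A := le_trans (abs_nonneg _) (hA 0)
  have hbound : ∀ n, |c n| ≤ A * 2 ^ n := by
    intro n
    have h2 : (0:ℝ) < (1/2) ^ n := by positivity
    have := hA n
    rw [abs_mul, abs_of_pos h2] at this
    calc |c n| = |c n| * (1/2)^n * 2^n := by
          rw [mul_assoc, ← mul_pow]; norm_num
      _ ≤ A * 2 ^ n := by
          apply mul_le_mul_of_nonneg_right this (by positivity)
  -- strong induction
  intro n
  induction n using Nat.strong_induction_on with
  | _ N ih =>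
    have key : ∀ t : ℝ, 0 < t → t ≤ 1/4 → |c N| ≤ A * 2 ^ (N + 2) * t := by
      intro t ht ht4
      have ht2 : t ≤ 1/2 := by linarith
      have h2t0 : (0:ℝ) ≤ 2 * t := by linarith
      have h2t1 : 2 * t < 1 := by linarith
      have hsum := h t ht ht2
      have hsummable := hsum.summable
      have hsplit := Summable.sum_add_tsum_nat_add (G := ℝ) (f := fun n => c n * t ^ n) (N + 1) hsummable
      rw [hsum.tsum_eq] at hsplit
      have hfin : ∑ i ∈ Finset.range (N + 1), c i * t ^ i = c N * t ^ N := by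
        rw [Finset.sum_range_succ]
        rw [Finset.sum_eq_zero fun i hi => by
          rw [ih i (Finset.mem_range.1 hi)]; ring]
        ring
      rw [hfin] at hsplit
      -- c N * t^N = - tail
      have htail : c N * t ^ N = -∑' i, c (i + (N + 1)) * t ^ (i + (N + 1)) := by linarith
      have hgeo : HasSum (fun i : ℕ => A * (2 * t) ^ (N + 1) * (2 * t) ^ i)
          (A * (2 * t) ^ (N + 1) * (1 - 2 * t)⁻¹) :=
        (hasSum_geometric_of_lt_one h2t0 h2t1).mul_left _
      have hgeo' : HasSum (fun i : ℕ => A * (2 * t) ^ (i + (N + 1)))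
          (A * (2 * t) ^ (N + 1) * (1 - 2 * t)⁻¹) := by
        convert hgeo using 2 with i
        rw [pow_add]; ring
      have hnorm : ∀ i : ℕ, ‖c (i + (N + 1)) * t ^ (i + (N + 1))‖ ≤ A * (2 * t) ^ (i + (N + 1)) := by
        intro i
        rw [Real.norm_eq_abs, abs_mul, abs_of_pos (pow_pos ht _), mul_pow]
        rw [← mul_assoc]
        exact mul_le_mul_of_nonneg_right (hbound _) (le_of_lt (pow_pos ht _))
      have hle := tsum_of_norm_bounded hgeo' hnorm
      have habs : |c N| * t ^ N ≤ A * (2*t)^(N+1) * (1 - 2*t)⁻¹ := by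
        have heq : |c N| * t ^ N = ‖c N * t ^ N‖ := by
          rw [Real.norm_eq_abs, abs_mul, abs_of_pos (pow_pos ht _)]
        rw [heq, htail, norm_neg]
        exact hle
      have hinv : (1 - 2*t)⁻¹ ≤ 2 := by
        rw [show (2:ℝ) = ((1:ℝ)/2)⁻¹ by norm_num]
        exact inv_anti₀ (by norm_num) (by linarith)
      have h2 : |c N| * t^N ≤ A * 2^(N+2) * t * t^N := by
        calc |c N| * t^N ≤ A * (2*t)^(N+1) * (1-2*t)⁻¹ := habs
          _ ≤ A * (2*t)^(N+1) * 2 := by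
              apply mul_le_mul_of_nonneg_left hinv (by positivity)
          _ = A * 2^(N+2) * t * t^N := by rw [mul_pow]; ring
      exact le_of_mul_le_mul_right h2 (pow_pos ht N)
    have h0 : |c N| ≤ 0 := by
      apply le_of_forall_pos_le_add
      intro ε hε
      set B := A * 2^(N+2) with hBdef
      have hB0 : 0 ≤ B := by positivity
      set t := min (1/4) (ε / (B+1)) with htdef
      have ht0 : 0 < t := lt_min (by norm_num) (by positivity)
      have hkey := key t ht0 (min_le_left _ _)
      have hd : ε/(B+1) * (B+1) = ε := div_mul_cancel₀ _ (by positivity)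
      have hdnn : 0 ≤ ε/(B+1) := by positivity
      calc |c N| ≤ B * t := hkey
        _ ≤ B * (ε/(B+1)) := mul_le_mul_of_nonneg_left (min_le_right _ _) hB0
        _ ≤ 0 + ε := by nlinarith
    exact abs_eq_zero.1 (le_antisymm h0 (abs_nonneg _))

/-- `∑_{1 ≤ k₁ < ⋯ < kₙ} 1/(k₁² ⋯ kₙ²) = π^(2n)/(2n+1)!`; the sum over strictly
increasing tuples of positive integers is realized as a sum over finite sets of
cardinality `n` of natural indices, with index `i` corresponding to `i + 1`. -/
theorem multiple_sum_inv_squares (n : ℕ) (hn : 0 < n) :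
    ∑' s : {s : Finset ℕ // s.card = n}, ∏ i ∈ s.1, (1 : ℝ) / ((i : ℝ) + 1) ^ 2 =
      Real.pi ^ (2 * n) / ((2 * n + 1).factorial : ℝ) := by
  set a : ℕ → ℝ := fun m => ∑' s : {s : Finset ℕ // s.card = m}, ∏ i ∈ s.1, (1 : ℝ) / ((i : ℝ) + 1) ^ 2 with ha
  set b : ℕ → ℝ := fun m => π ^ (2 * m) / ((2 * m + 1).factorial : ℝ) with hb
  have h : ∀ t : ℝ, 0 < t → t ≤ 1 / 2 → HasSum (fun m => (a m - b m) * t ^ m) 0 := by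
    intro t ht _
    set x := Real.sqrt t with hxdef
    have hx : 0 < x := Real.sqrt_pos.2 ht
    have hx2 : x ^ 2 = t := Real.sq_sqrt ht.le
    have hA : HasSum (fun m => a m * t ^ m) (Real.sinh (π * x) / (π * x)) := by
      rw [← hx2]
      exact hasSum_coeff x hx
    have hB : HasSum (fun m => b m * t ^ m) (Real.sinh (π * x) / (π * x)) := by
      have h1 := (hasSum_sinh_series (π * x)).div_const (π * x)
      rw [← hx2]
      convert h1 using 2 with m
      · rfl
      have hπx : π * x ≠ 0 := by positivity
      rw [hb]
      field_simp
      rw [show (x * π) ^ (2 * m + 1) = ((x * π) ^ 2) ^ m * (x * π) by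
        rw [← pow_mul, pow_succ]]
      ring
    have := hA.sub hB
    rw [sub_self] at this
    convert this using 2 with m
    · rfl
    ring
  have hz := coeff_unique h n
  have : a n = b n := by linarith [hz]
  simpa [ha, hb] using this
end
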